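/- For any Hermitian matrix M and normalized density matrix σ on a finite-dimensional Hilbert space with supp(M) ⊆ supp(σ), the trace norm of M is bounded by the σ-weighted Schatten-2 norm: ‖M‖₁ ≤ ‖σ^{-1/4} M σ^{-1/4}‖₂, where σ^{-1} denotes the Moore–Penrose pseudoinverse. -/

import Mathlib

set_option linter.unusedSectionVars false
set_option maxHeartbeats 1000000

open Matrix MeasureTheory
open scoped ComplexOrder BigOperators

noncomputable section

variable {n : Type*} [Fintype n] [DecidableEq n]

/-- Frobenius / Schatten-2 norm. -/
def frob (M : Matrix n n ℂ) : ℝ := Real.sqrt (Mᴴ * M).trace.re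

/-- Trace / Schatten-1 norm. -/
def trNorm (M : Matrix n n ℂ) : ℝ :=
  ((Matrix.posSemidef_conjTranspose_mul_self M).1.eigenvectorUnitary.1 *
    diagonal (((↑) : ℝ → ℂ) ∘ (√·) ∘ (Matrix.posSemidef_conjTranspose_mul_self M).1.eigenvalues) *
    (star (Matrix.posSemidef_conjTranspose_mul_self M).1.eigenvectorUnitary : Matrix n n ℂ)).trace.re

/-- Real power of a Hermitian matrix via the spectral decomposition, sending zero
eigenvalues to zero (hence Moore–Penrose pseudoinverse powers for negative exponents);
junk value `0` for non-Hermitian input. -/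
def mpow (M : Matrix n n ℂ) (r : ℝ) : Matrix n n ℂ :=
  if h : M.IsHermitian then
    (h.eigenvectorUnitary : Matrix n n ℂ) *
      Matrix.diagonal (fun i =>
        ((if h.eigenvalues i = 0 then (0:ℝ) else h.eigenvalues i ^ r : ℝ) : ℂ)) *
      (h.eigenvectorUnitary : Matrix n n ℂ)ᴴ
  else 0

/-- Operator (Schatten-∞) norm. -/
def opNorm (M : Matrix n n ℂ) : ℝ := ‖(Matrix.toEuclideanLin M).toContinuousLinearMap‖

/-- Support of a matrix, i.e. its range as a linear map. -/
def supp (M : Matrix n n ℂ) : Submodule ℂ (n → ℂ) := LinearMap.range M.mulVecLin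

/-- Rényi-2 divergence (base 2). -/
def D2 (α β : Matrix n n ℂ) : ℝ :=
  2 * Real.logb 2 (frob (mpow β (-(1/4)) * α * mpow β (-(1/4))))

/-- Max (Rényi-∞) divergence (base 2). -/
def Dinf (α β : Matrix n n ℂ) : ℝ :=
  Real.logb 2 (opNorm (mpow β (-(1/2)) * α * mpow β (-(1/2))))

/-- Kronecker / tensor product of square matrices, on the product index type. -/
def kron {m : Type*} (P : Matrix n n ℂ) (Q : Matrix m m ℂ) : Matrix (n × m) (n × m) ℂ :=
  fun z w => P z.1 w.1 * Q z.2 w.2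

/-! ### Auxiliary machinery -/

/-- Conjugation of a real diagonal by a unitary. -/
def cg (U : Matrix.unitaryGroup n ℂ) (g : n → ℝ) : Matrix n n ℂ :=
  (U : Matrix n n ℂ) * Matrix.diagonal (fun i => (g i : ℂ)) * (U : Matrix n n ℂ)ᴴ

lemma UhU (U : Matrix.unitaryGroup n ℂ) : (U : Matrix n n ℂ)ᴴ * (U : Matrix n n ℂ) = 1 := by
  simpa [Matrix.star_eq_conjTranspose] using Matrix.UnitaryGroup.star_mul_self U

lemma UUh (U : Matrix.unitaryGroup n ℂ) : (U : Matrix n n ℂ) * (U : Matrix n n ℂ)ᴴ = 1 := by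
  simpa [Matrix.star_eq_conjTranspose] using Unitary.mul_star_self_of_mem U.2

lemma cg_mul (U : Matrix.unitaryGroup n ℂ) (g h : n → ℝ) :
    cg U g * cg U h = cg U (fun i => g i * h i) := by
  unfold cg
  have : ∀ D E : Matrix n n ℂ, ((U : Matrix n n ℂ) * D * (U : Matrix n n ℂ)ᴴ) *
      ((U : Matrix n n ℂ) * E * (U : Matrix n n ℂ)ᴴ) =
      (U : Matrix n n ℂ) * (D * E) * (U : Matrix n n ℂ)ᴴ := by
    intro D E
    calc ((U : Matrix n n ℂ) * D * (U : Matrix n n ℂ)ᴴ) * ((U : Matrix n n ℂ) * E * (U : Matrix n n ℂ)ᴴ)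
        = (U : Matrix n n ℂ) * D * (((U : Matrix n n ℂ)ᴴ * (U : Matrix n n ℂ)) * (E * (U : Matrix n n ℂ)ᴴ)) := by
          simp only [Matrix.mul_assoc]
      _ = (U : Matrix n n ℂ) * (D * E) * (U : Matrix n n ℂ)ᴴ := by
          rw [UhU, Matrix.one_mul]; simp only [Matrix.mul_assoc]
  rw [this, Matrix.diagonal_mul_diagonal]
  congr 2
  funext i
  push_cast
  ring

lemma cg_herm (U : Matrix.unitaryGroup n ℂ) (g : n → ℝ) : (cg U g).IsHermitian := by
  unfold Matrix.IsHermitian cg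
  simp only [Matrix.conjTranspose_mul, Matrix.conjTranspose_conjTranspose,
    Matrix.diagonal_conjTranspose, Matrix.mul_assoc]
  congr 2
  funext i
  simp [Pi.star_def]

lemma cg_psd (U : Matrix.unitaryGroup n ℂ) (g : n → ℝ) (hg : ∀ i, 0 ≤ g i) :
    (cg U g).PosSemidef := by
  have h : (Matrix.diagonal (fun i => ((g i : ℝ) : ℂ))).PosSemidef := by
    rw [Matrix.posSemidef_diagonal_iff]
    intro i
    exact_mod_cast Complex.zero_le_real.2 (hg i)
  exact h.mul_mul_conjTranspose_same _

lemma cg_trace (U : Matrix.unitaryGroup n ℂ) (g : n → ℝ) :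
    (cg U g).trace = ∑ i, (g i : ℂ) := by
  unfold cg
  rw [Matrix.trace_mul_cycle, UhU, Matrix.one_mul, Matrix.trace_diagonal]

lemma cg_trace_re (U : Matrix.unitaryGroup n ℂ) (g : n → ℝ) :
    (cg U g).trace.re = ∑ i, g i := by
  rw [cg_trace, Complex.re_sum]
  simp

lemma cg_one (U : Matrix.unitaryGroup n ℂ) : cg U (fun _ => 1) = 1 := by
  unfold cg
  have : Matrix.diagonal (fun (_ : n) => ((1:ℝ) : ℂ)) = 1 := by simp
  rw [this, Matrix.mul_one, UUh]

lemma cg_sub (U : Matrix.unitaryGroup n ℂ) (g h : n → ℝ) :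
    cg U g - cg U h = cg U (fun i => g i - h i) := by
  unfold cg
  rw [← Matrix.sub_mul, ← Matrix.mul_sub, Matrix.diagonal_sub]
  congr 2
  funext i
  push_cast
  ring

lemma mpow_eq_cg {σ : Matrix n n ℂ} (hσ : σ.IsHermitian) (r : ℝ) :
    mpow σ r = cg hσ.eigenvectorUnitary
      (fun i => if hσ.eigenvalues i = 0 then (0:ℝ) else hσ.eigenvalues i ^ r) := by
  rw [mpow, dif_pos hσ]; rfl

lemma spectral_cg {σ : Matrix n n ℂ} (hσ : σ.IsHermitian) :
    σ = cg hσ.eigenvectorUnitary hσ.eigenvalues := by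
  conv_lhs => rw [hσ.spectral_theorem]
  rfl

lemma trace_re_eq (X Y : Matrix n n ℂ) :
    (Xᴴ * Y).trace.re = ∑ p : n × n, ((starRingEnd ℂ) (X p.2 p.1) * Y p.2 p.1).re := by
  rw [Fintype.sum_prod_type]
  simp [Matrix.trace, Matrix.mul_apply, Matrix.diag, Matrix.conjTranspose_apply, Complex.re_sum]

lemma trace_self_re (X : Matrix n n ℂ) :
    (Xᴴ * X).trace.re = ∑ p : n × n, ‖X p.2 p.1‖ ^ 2 := by
  rw [trace_re_eq]
  congr 1; funext p
  rw [mul_comm, Complex.mul_conj, Complex.sq_norm]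
  simp

lemma frob_nonneg (X : Matrix n n ℂ) : 0 ≤ frob X := Real.sqrt_nonneg _

lemma frob_sq (X : Matrix n n ℂ) : frob X ^ 2 = (Xᴴ * X).trace.re := by
  rw [frob, Real.sq_sqrt]
  rw [trace_self_re]
  positivity

lemma trace_CS (X Y : Matrix n n ℂ) : (Xᴴ * Y).trace.re ≤ frob X * frob Y := by
  rw [trace_re_eq]
  have h1 : ∀ p : n × n, ((starRingEnd ℂ) (X p.2 p.1) * Y p.2 p.1).re ≤
      ‖X p.2 p.1‖ * ‖Y p.2 p.1‖ := by
    intro p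
    calc ((starRingEnd ℂ) (X p.2 p.1) * Y p.2 p.1).re
        ≤ ‖(starRingEnd ℂ) (X p.2 p.1) * Y p.2 p.1‖ := Complex.re_le_norm _
      _ = ‖X p.2 p.1‖ * ‖Y p.2 p.1‖ := by
          rw [norm_mul, Complex.norm_conj]
  calc ∑ p : n × n, ((starRingEnd ℂ) (X p.2 p.1) * Y p.2 p.1).re
      ≤ ∑ p : n × n, ‖X p.2 p.1‖ * ‖Y p.2 p.1‖ :=
        Finset.sum_le_sum fun p _ => h1 p
    _ ≤ Real.sqrt (∑ p : n × n, ‖X p.2 p.1‖ ^ 2) *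
        Real.sqrt (∑ p : n × n, ‖Y p.2 p.1‖ ^ 2) :=
        Real.sum_mul_le_sqrt_mul_sqrt _ _ _
    _ = frob X * frob Y := by rw [frob, frob, trace_self_re, trace_self_re]

lemma psd_trace_re_nonneg {A : Matrix n n ℂ} (hA : A.PosSemidef) : 0 ≤ A.trace.re := by
  have h : ∀ i, 0 ≤ (A i i).re := by
    intro i
    have h0 := hA.dotProduct_mulVec_nonneg (Pi.single i 1)
    have h2 : star (Pi.single i 1 : n → ℂ) ⬝ᵥ A *ᵥ Pi.single i 1 = A i i := by
      simp [Matrix.mulVec_single, dotProduct, Pi.single_apply, star_eq_iff_star_eq]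
    rw [h2] at h0
    exact (Complex.le_def.1 h0).1
  rw [Matrix.trace, Complex.re_sum]
  exact Finset.sum_nonneg fun i _ => h i

lemma L1 (Q Y : Matrix n n ℂ) (hQ : (1 - Q).PosSemidef) :
    (Yᴴ * Q * Y).trace.re ≤ (Yᴴ * Y).trace.re := by
  have h := hQ.conjTranspose_mul_mul_same Y
  have h2 : Yᴴ * (1 - Q) * Y = Yᴴ * Y - Yᴴ * Q * Y := by
    rw [Matrix.mul_sub, Matrix.mul_one, Matrix.sub_mul]
  rw [h2] at h
  have h3 := psd_trace_re_nonneg h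
  rw [Matrix.trace_sub, Complex.sub_re] at h3
  linarith

/-- Matrix-weighted Cauchy–Schwarz: for Hermitian `M` and a normalized density matrix `σ`
with `supp M ⊆ supp σ`, `‖M‖₁ ≤ ‖σ^{-1/4} M σ^{-1/4}‖₂`. -/
theorem weighted_cauchy_schwarz {n : Type*} [Fintype n] [DecidableEq n]
    (M σ : Matrix n n ℂ) (hM : M.IsHermitian) (hσ : σ.PosSemidef) (hσtr : σ.trace = 1)
    (hsupp : supp M ≤ supp σ) :
    trNorm M ≤ frob (mpow σ (-(1/4)) * M * mpow σ (-(1/4))) := by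
  classical
  have hσH : σ.IsHermitian := hσ.1
  set U := hσH.eigenvectorUnitary with hUdef
  set d := hσH.eigenvalues with hddef
  have hd0 : ∀ i, 0 ≤ d i := fun i => hσ.eigenvalues_nonneg i
  set a : n → ℝ := fun i => if d i = 0 then 0 else d i ^ (-(1/4) : ℝ) with hadef
  set b : n → ℝ := fun i => if d i = 0 then 0 else d i ^ ((1/4) : ℝ) with hbdef
  set s2 : n → ℝ := fun i => if d i = 0 then 0 else d i ^ ((1/2) : ℝ) with hs2def
  set p : n → ℝ := fun i => if d i = 0 then 0 else 1 with hpdef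
  set A := cg U a with hAdef
  set B := cg U b with hBdef2
  have hApow : mpow σ (-(1/4)) = A := by
    rw [mpow_eq_cg hσH, hAdef, hadef, hUdef, hddef]
  set S2 := cg U s2 with hS2def2
  set P := cg U p with hPdef2
  have hσcg : σ = cg U d := spectral_cg hσH
  -- scalar identities
  have hba : B * A = P := by
    rw [hBdef2, hAdef, cg_mul, hPdef2]
    refine congrArg (cg _) (funext fun i => ?_)
    by_cases h : d i = 0
    · simp [hadef, hbdef, hpdef, h]
    · have hpos : 0 < d i := lt_of_le_of_ne (hd0 i) (Ne.symm h)
      simp only [hadef, hbdef, hpdef, if_neg h]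
      rw [← Real.rpow_add hpos]
      norm_num
  have hab : A * B = P := by
    rw [hBdef2, hAdef, cg_mul, hPdef2]
    refine congrArg (cg _) (funext fun i => ?_)
    by_cases h : d i = 0
    · simp [hadef, hbdef, hpdef, h]
    · have hpos : 0 < d i := lt_of_le_of_ne (hd0 i) (Ne.symm h)
      simp only [hadef, hbdef, hpdef, if_neg h]
      rw [← Real.rpow_add hpos]
      norm_num
  have hbb : B * B = S2 := by
    rw [hBdef2, cg_mul, hS2def2]
    refine congrArg (cg _) (funext fun i => ?_)
    by_cases h : d i = 0
    · simp [hbdef, hs2def, h]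
    · have hpos : 0 < d i := lt_of_le_of_ne (hd0 i) (Ne.symm h)
      simp only [hbdef, hs2def, if_neg h]
      rw [← Real.rpow_add hpos]
      norm_num
  have hss : S2 * S2 = σ := by
    rw [hS2def2, cg_mul, hσcg]
    refine congrArg (cg _) (funext fun i => ?_)
    by_cases h : d i = 0
    · simp [hs2def, h]
    · have hpos : 0 < d i := lt_of_le_of_ne (hd0 i) (Ne.symm h)
      simp only [hs2def, if_neg h]
      rw [← Real.rpow_add hpos]
      norm_num
  have hPσ : P * σ = σ := by
    conv_lhs => rw [hσcg]
    rw [hPdef2, cg_mul]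
    conv_rhs => rw [hσcg]
    refine congrArg (cg _) (funext fun i => ?_)
    by_cases h : d i = 0
    · simp [hpdef, h]
    · simp [hpdef, h]
  -- Hermitian facts
  have hAherm : A.IsHermitian := cg_herm U a
  have hBherm : B.IsHermitian := cg_herm U b
  have hS2herm : S2.IsHermitian := cg_herm U s2
  have hPherm : P.IsHermitian := cg_herm U p
  -- support: P * M = M and M * P = M
  have hPM : P * M = M := by
    have key : ∀ x : n → ℂ, (P * M) *ᵥ x = M *ᵥ x := by
      intro x
      have hmem : M *ᵥ x ∈ supp M := ⟨x, rfl⟩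
      obtain ⟨y, hy⟩ := hsupp hmem
      rw [← Matrix.mulVec_mulVec, ← hy, Matrix.mulVecLin_apply, Matrix.mulVec_mulVec, hPσ]
    ext i j
    have h := congrFun (key (Pi.single j 1)) i
    simpa using h
  have hMP : M * P = M := by
    have h := congrArg Matrix.conjTranspose hPM
    rwa [Matrix.conjTranspose_mul, hM.eq, hPherm.eq] at h
  have hMdecomp : M = B * (A * M * A) * B := by
    have h1 : B * (A * M * A) * B = (B * A) * M * (A * B) := by
      simp only [Matrix.mul_assoc]
    rw [h1, hba, hab, hPM, hMP]
  -- M side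
  set V := hM.eigenvectorUnitary with hVdef
  set e := hM.eigenvalues with hedef
  set s : n → ℝ := fun i => if e i < 0 then -1 else if e i = 0 then 0 else 1 with hsdef
  set q : n → ℝ := fun i => if e i = 0 then 0 else 1 with hqdef
  set W := cg V s with hWdef
  set Q := cg V q with hQdef
  have hMcg : M = cg V e := spectral_cg hM
  have hWherm : W.IsHermitian := cg_herm V s
  have hQherm : Q.IsHermitian := cg_herm V q
  have hse : ∀ i, s i * e i = |e i| := by
    intro i
    rcases lt_trichotomy (e i) 0 with h | h | h
    · simp only [hsdef, if_pos h]
      rw [abs_of_neg h]; ring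
    · simp [hsdef, h]
    · simp only [hsdef, if_neg (not_lt.2 h.le), if_neg h.ne']
      rw [abs_of_pos h]; ring
  have hWW : W * W = Q := by
    rw [hWdef, cg_mul, hQdef]
    refine congrArg (cg _) (funext fun i => ?_)
    rcases lt_trichotomy (e i) 0 with h | h | h
    · simp [hsdef, hqdef, h, h.ne]
    · simp [hsdef, hqdef, h]
    · simp [hsdef, hqdef, not_lt.2 h.le, h.ne']
  have hQQ : Q * Q = Q := by
    rw [hQdef, cg_mul]
    refine congrArg (cg _) (funext fun i => ?_)
    by_cases h : e i = 0 <;> simp [hqdef, h]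
  have hQle : (1 - Q).PosSemidef := by
    rw [← cg_one V, hQdef, cg_sub]
    apply cg_psd
    intro i
    by_cases h : e i = 0 <;> simp [hqdef, h]
  have hWM : W * M = cg V (fun i => |e i|) := by
    conv_lhs => rw [hMcg]
    rw [hWdef, cg_mul]
    refine congrArg (cg _) (funext fun i => ?_)
    exact hse i
  -- trNorm M = ∑ |e i|
  have habs_nonneg : ∀ i, (0:ℝ) ≤ |e i| := fun i => abs_nonneg _
  have htrNorm : trNorm M = ∑ i, |e i| := by
    have hH := (Matrix.posSemidef_conjTranspose_mul_self M).1
    have h1 : trNorm M = (cfc Real.sqrt (Mᴴ * M)).trace.re := by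
      rw [hH.cfc_eq, Matrix.IsHermitian.cfc, Unitary.conjStarAlgAut_apply]; rfl
    have hsa : IsSelfAdjoint M := hM
    have h2 : Mᴴ * M = cfc (fun x : ℝ => x * x) M := by
      rw [cfc_mul (fun x : ℝ => x) (fun x : ℝ => x) M, cfc_id' (R := ℝ) (a := M), hM.eq]
    have h3 : (Real.sqrt ∘ fun x : ℝ => x * x) = fun x => |x| :=
      funext fun x => Real.sqrt_mul_self_eq_abs x
    rw [h1, h2, ← cfc_comp Real.sqrt (fun x : ℝ => x * x) M, h3, hM.cfc_eq,
      Matrix.IsHermitian.cfc, Unitary.conjStarAlgAut_apply]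
    exact cg_trace_re V (fun i => |e i|)
  have htrWM : (W * M).trace.re = ∑ i, |e i| := by
    rw [hWM, cg_trace_re]
  -- trace identity: tr(W M) = tr((BWB)ᴴ (A M A))
  set X := B * W * B with hXdef
  set N := A * M * A with hNdef
  have hXherm : Xᴴ = X := by
    rw [hXdef, Matrix.conjTranspose_mul, Matrix.conjTranspose_mul, hBherm.eq, hWherm.eq,
      Matrix.mul_assoc]
  have htr1 : (Xᴴ * N).trace = (W * M).trace := by
    rw [hXherm]
    have e1 : X * N = (B * W) * (B * N) := by
      rw [hXdef]; simp only [Matrix.mul_assoc]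
    have e3 : W * M = (W * (B * N)) * B := by
      conv_lhs => rw [hMdecomp]
      simp only [Matrix.mul_assoc]
    have e4 : B * (W * (B * N)) = (B * W) * (B * N) := by simp only [Matrix.mul_assoc]
    rw [e1, e3, Matrix.trace_mul_comm (B * W) (B * N), Matrix.trace_mul_comm (W * (B * N)) B,
      e4]
    exact (Matrix.trace_mul_comm _ _).symm
  have key1 : trNorm M = (Xᴴ * N).trace.re := by
    rw [htrNorm, ← htrWM, htr1]
  -- bound frob X
  have htr3 : (S2ᴴ * S2).trace.re = 1 := by
    rw [hS2herm.eq, hss, hσtr]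
    simp
  have hfrobS2 : frob S2 = 1 := by
    rw [frob, htr3, Real.sqrt_one]
  -- frob (W * S2 * W) ≤ 1
  have hWSWherm : (W * S2 * W)ᴴ = W * S2 * W := by
    rw [Matrix.conjTranspose_mul, Matrix.conjTranspose_mul, hWherm.eq, hS2herm.eq,
      Matrix.mul_assoc]
  have hSQherm : (S2 * Q)ᴴ = Q * S2 := by
    rw [Matrix.conjTranspose_mul, hS2herm.eq, hQherm.eq]
  have htrWSW : ((W * S2 * W)ᴴ * (W * S2 * W)).trace = ((S2 * Q)ᴴ * Q * (S2 * Q)).trace := by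
    rw [hWSWherm, hSQherm]
    have e5 : (W * S2 * W) * (W * S2 * W) = W * (S2 * ((W * W) * (S2 * W))) := by
      simp only [Matrix.mul_assoc]
    have e6 : Q * S2 * Q * (S2 * Q) = Q * (S2 * (Q * (S2 * Q))) := by
      simp only [Matrix.mul_assoc]
    rw [e5, hWW, e6, Matrix.trace_mul_comm W (S2 * (Q * (S2 * W))),
      Matrix.trace_mul_comm Q (S2 * (Q * (S2 * Q)))]
    have e7 : S2 * (Q * (S2 * W)) * W = S2 * (Q * (S2 * (W * W))) := by
      simp only [Matrix.mul_assoc]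
    have e8 : S2 * (Q * (S2 * Q)) * Q = S2 * (Q * (S2 * (Q * Q))) := by
      simp only [Matrix.mul_assoc]
    rw [e7, e8, hWW, hQQ]
  have htrSQ : ((S2 * Q)ᴴ * (S2 * Q)).trace = (S2ᴴ * Q * S2).trace := by
    rw [hSQherm, hS2herm.eq]
    have e9 : Q * S2 * (S2 * Q) = Q * (S2 * (S2 * Q)) := by simp only [Matrix.mul_assoc]
    have e10 : S2 * Q * S2 = S2 * (Q * S2) := by simp only [Matrix.mul_assoc]
    rw [e9, e10, Matrix.trace_mul_comm Q (S2 * (S2 * Q)),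
      Matrix.trace_mul_comm S2 (Q * S2)]
    have e11 : S2 * (S2 * Q) * Q = S2 * (S2 * (Q * Q)) := by simp only [Matrix.mul_assoc]
    rw [e11, hQQ]
    have e13 : Q * S2 * S2 = Q * (S2 * S2) := by simp only [Matrix.mul_assoc]
    rw [e13, Matrix.trace_mul_comm Q (S2 * S2)]
    have e14 : S2 * S2 * Q = S2 * (S2 * Q) := by simp only [Matrix.mul_assoc]
    rw [e14]
  have hfWsq : frob (W * S2 * W) ^ 2 ≤ 1 := by
    have h1 := L1 Q (S2 * Q) hQle
    have h2 := L1 Q S2 hQle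
    have h3 : frob (W * S2 * W) ^ 2 = ((S2 * Q)ᴴ * Q * (S2 * Q)).trace.re := by
      rw [frob_sq, htrWSW]
    have h4 : ((S2 * Q)ᴴ * (S2 * Q)).trace.re = (S2ᴴ * Q * S2).trace.re := by rw [htrSQ]
    linarith [h3, h4, h1, h2, htr3]
  have hfWle : frob (W * S2 * W) ≤ 1 := by
    nlinarith [frob_nonneg (W * S2 * W)]
  have hXsq : frob X ^ 2 ≤ 1 := by
    have h5 : (Xᴴ * X).trace = (S2ᴴ * (W * S2 * W)).trace := by
      rw [hXherm, hS2herm.eq]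
      have e15 : X * X = (B * W) * ((B * B) * (W * B)) := by
        rw [hXdef]; simp only [Matrix.mul_assoc]
      rw [e15, hbb, Matrix.trace_mul_comm (B * W) (S2 * (W * B))]
      have e16 : S2 * (W * B) * (B * W) = S2 * (W * ((B * B) * W)) := by
        simp only [Matrix.mul_assoc]
      rw [e16, hbb]
      have e17 : S2 * (W * S2 * W) = S2 * (W * (S2 * W)) := by simp only [Matrix.mul_assoc]
      rw [e17]
    have h6 := trace_CS S2 (W * S2 * W)
    have h7 : frob X ^ 2 = (S2ᴴ * (W * S2 * W)).trace.re := by rw [frob_sq, h5]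
    have h8 : frob S2 * frob (W * S2 * W) ≤ 1 := by
      rw [hfrobS2, one_mul]; exact hfWle
    linarith
  have hXle : frob X ≤ 1 := by
    nlinarith [frob_nonneg X]
  -- conclude
  have hfinal := trace_CS X N
  have hgoal : trNorm M ≤ frob N := by
    have := mul_le_of_le_one_left (frob_nonneg N) hXle
    calc trNorm M = (Xᴴ * N).trace.re := key1
      _ ≤ frob X * frob N := hfinal
      _ ≤ 1 * frob N := by
          have := frob_nonneg N
          nlinarith
      _ = frob N := one_mul _
  rw [hApow, ← hNdef]
  exact hgoal
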